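/- For any real 1 ≤ X < B and fixed base b ≥ 2, the sum over primes p with X < p < B of 1/(p · ℓ_b(p)²) is O(log(B)/X) + O(log(y)/X + log(B)/y²) for any choice of y; in particular, choosing y appropriately, this sum is Õ(X⁻¹), where the implied constants depend on b and logarithmic factors in B. -/

import Mathlib

open scoped Classical

lemma aux_ord_pos (b p : ℕ) (hp : p.Prime) (hpb : ¬ p ∣ b) :
    0 < orderOf (b : ZMod p) := by
  haveI : Fact p.Prime := ⟨hp⟩
  have hne : (b : ZMod p) ≠ 0 := by
    simpa [ZMod.natCast_eq_zero_iff] using hpb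
  obtain ⟨u, hu⟩ := isUnit_iff_ne_zero.mpr hne
  rw [← hu, orderOf_units]
  exact orderOf_pos u

lemma aux_dvd_pow_sub_one (b p : ℕ) (hb : 1 ≤ b) (hp : p.Prime) (hpb : ¬ p ∣ b) :
    p ∣ b ^ (orderOf (b : ZMod p)) - 1 := by
  haveI : Fact p.Prime := ⟨hp⟩
  rw [← ZMod.natCast_eq_zero_iff]
  have h1 : 1 ≤ b ^ (orderOf (b : ZMod p)) := Nat.one_le_pow _ _ hb
  push_cast [Nat.cast_sub h1]
  rw [pow_orderOf_eq_one, sub_self]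

lemma aux_card_primeFactors_lt (b d : ℕ) (hb : 2 ≤ b) (hd : 1 ≤ d) :
    (b ^ d - 1).primeFactors.card < b * d := by
  set N := b ^ d - 1 with hN
  have hN1 : 1 ≤ N := by
    have : 2 ≤ b ^ d := le_trans hb (Nat.le_self_pow (by omega) b)
    omega
  have h2 : 2 ^ N.primeFactors.card ≤ N := by
    calc 2 ^ N.primeFactors.card ≤ ∏ p ∈ N.primeFactors, p :=
          Finset.pow_card_le_prod _ _ _ (fun p hp => (Nat.prime_of_mem_primeFactors hp).two_le)
      _ ≤ N := Nat.le_of_dvd (by omega) (Nat.prod_primeFactors_dvd N)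
  have h3 : N < 2 ^ (b * d) := by
    have hb2 : b ≤ 2 ^ b := le_of_lt (Nat.lt_two_pow_self (n := b))
    have : b ^ d ≤ 2 ^ (b * d) := by
      calc b ^ d ≤ (2 ^ b) ^ d := Nat.pow_le_pow_left hb2 d
        _ = 2 ^ (b * d) := by rw [← pow_mul]
    omega
  exact (Nat.pow_lt_pow_iff_right (le_refl 2)).mp (lt_of_le_of_lt h2 h3)

lemma aux_count (b d n : ℕ) (hb : 2 ≤ b) (hd : 1 ≤ d) (P : ℕ → Prop) :
    ((Finset.range n).filter
      (fun p => (p.Prime ∧ ¬ p ∣ b ∧ P p) ∧ orderOf (b : ZMod p) = d)).card ≤ b * d := by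
  have hsub : ((Finset.range n).filter
      (fun p => (p.Prime ∧ ¬ p ∣ b ∧ P p) ∧ orderOf (b : ZMod p) = d)) ⊆
      (b ^ d - 1).primeFactors := by
    intro p hp
    simp only [Finset.mem_filter] at hp
    obtain ⟨-, ⟨hpp, hpb, -⟩, hord⟩ := hp
    have h2 : 2 ≤ b ^ d := le_trans hb (Nat.le_self_pow (by omega) b)
    refine Nat.mem_primeFactors.mpr ⟨hpp, ?_, by omega⟩
    rw [← hord]
    exact aux_dvd_pow_sub_one b p (by omega) hpp hpb
  exact le_of_lt (lt_of_le_of_lt (Finset.card_le_card hsub) (aux_card_primeFactors_lt b d hb hd))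

/-- For a fixed base `b ≥ 2` and reals `1 ≤ X < B`, the sum over primes `X < p < B`
of `1/(p · ℓ_b(p)²)` is `Õ(X⁻¹)`: it is bounded by `C · (log(4 + B))^c / X` for
absolute constants `C, c` depending only on `b`. -/
theorem sum_reciprocal_order_squared (b : ℕ) (hb : 2 ≤ b) :
    ∃ C c : ℝ, 0 < C ∧ 0 < c ∧ ∀ X B : ℝ, 1 ≤ X → X < B →
      ∑ p ∈ (Finset.range ⌈B⌉₊).filter
          (fun p => p.Prime ∧ ¬ p ∣ b ∧ X < (p : ℝ)),
        1 / ((p : ℝ) * ((orderOf (b : ZMod p) : ℝ)) ^ 2)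
      ≤ C * (Real.log (4 + B)) ^ c / X := by
  refine ⟨2 * b, 1, by positivity, one_pos, ?_⟩
  intro X B hX hXB
  have hXpos : 0 < X := lt_of_lt_of_le one_pos hX
  have hB1 : 1 < B := lt_of_le_of_lt hX hXB
  set n := ⌈B⌉₊ with hn
  set S := (Finset.range n).filter (fun p => p.Prime ∧ ¬ p ∣ b ∧ X < (p : ℝ)) with hS
  set f : ℕ → ℝ := fun p => 1 / ((p : ℝ) * ((orderOf (b : ZMod p) : ℝ)) ^ 2) with hf
  set g : ℕ → ℕ := fun p => orderOf (b : ZMod p) with hg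
  have hmaps : ∀ p ∈ S, g p ∈ Finset.range n := by
    intro p hp
    simp only [hS, Finset.mem_filter, Finset.mem_range] at hp
    obtain ⟨hpn, hpp, hpb, hXp⟩ := hp
    haveI : Fact p.Prime := ⟨hpp⟩
    have hne : (b : ZMod p) ≠ 0 := by
      simpa [ZMod.natCast_eq_zero_iff] using hpb
    have hdvd : g p ∣ p - 1 := ZMod.orderOf_dvd_card_sub_one hne
    have hle : g p ≤ p - 1 := Nat.le_of_dvd (by have := hpp.two_le; omega) hdvd
    have := hpp.two_le
    simp only [Finset.mem_range]
    omega
  have hfib := Finset.sum_fiberwise_of_maps_to hmaps f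
  have hmain : ∑ p ∈ S, f p ≤ ∑ d ∈ Finset.range n, (b : ℝ) / (X * d) := by
    rw [← hfib]
    refine Finset.sum_le_sum ?_
    intro d hd
    rcases Nat.eq_zero_or_pos d with rfl | hd1
    · have hempty : S.filter (fun p => g p = 0) = ∅ := by
        rw [Finset.filter_eq_empty_iff]
        intro p hp
        simp only [hS, Finset.mem_filter] at hp
        have := aux_ord_pos b p hp.2.1 hp.2.2.1
        simp only [hg]
        omega
      simp [hempty]
    · have hterm : ∀ p ∈ S.filter (fun p => g p = d), f p ≤ 1 / (X * d ^ 2) := by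
        intro p hp
        simp only [hS, Finset.mem_filter] at hp
        obtain ⟨⟨hpn, hpp, hpb, hXp⟩, hord⟩ := hp
        simp only [hf, hord.symm]
        have hdpos : (0 : ℝ) < (g p : ℝ) ^ 2 := by
          have := aux_ord_pos b p hpp hpb
          have : (0:ℝ) < (g p : ℝ) := by exact_mod_cast this
          positivity
        apply one_div_le_one_div_of_le
        · positivity
        · have : (g p : ℝ) = (d : ℝ) := by exact_mod_cast hord
          rw [this] at hdpos ⊢
          exact mul_le_mul_of_nonneg_right (le_of_lt hXp) (le_of_lt hdpos)
      calc ∑ p ∈ S.filter (fun p => g p = d), f p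
          ≤ (S.filter (fun p => g p = d)).card * (1 / (X * d ^ 2)) := by
            simpa [nsmul_eq_mul] using Finset.sum_le_card_nsmul _ _ _ hterm
        _ ≤ (b * d : ℕ) * (1 / (X * d ^ 2)) := by
            apply mul_le_mul_of_nonneg_right _ (by positivity)
            have hcount : (S.filter (fun p => g p = d)).card ≤ b * d := by
              rw [hS, Finset.filter_filter]
              exact aux_count b d n hb hd1 (fun p => X < (p : ℝ))
            exact_mod_cast hcount
        _ = (b : ℝ) / (X * d) := by
            have hd0 : (d : ℝ) ≠ 0 := Nat.cast_ne_zero.mpr (by omega)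
            push_cast
            field_simp
  have hn2 : 2 ≤ n := by
    rw [hn]
    exact_mod_cast Nat.lt_ceil.mpr (by exact_mod_cast hB1)
  obtain ⟨m, hm⟩ : ∃ m, n = m + 1 := ⟨n - 1, by omega⟩
  have hnB : (n : ℝ) < B + 1 := by
    rw [hn]
    exact Nat.ceil_lt_add_one (by linarith)
  have hm4 : (m : ℝ) ≤ 4 + B := by
    have : (m : ℝ) + 1 = (n : ℝ) := by exact_mod_cast hm.symm
    linarith
  have hlog1 : 1 ≤ Real.log (4 + B) := by
    have he : Real.exp 1 ≤ 4 + B := by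
      have := Real.exp_one_lt_d9
      linarith
    calc (1 : ℝ) = Real.log (Real.exp 1) := (Real.log_exp 1).symm
      _ ≤ Real.log (4 + B) := Real.log_le_log (Real.exp_pos 1) he
  have hlogm : Real.log m ≤ Real.log (4 + B) := by
    rcases Nat.eq_zero_or_pos m with rfl | hm1
    · simpa using le_trans zero_le_one hlog1
    · exact Real.log_le_log (by exact_mod_cast hm1) hm4
  have hharm : ∑ d ∈ Finset.range (m + 1), (b : ℝ) / (X * d)
      = ((b : ℝ) / X) * ∑ i ∈ Finset.range m, ((i : ℝ) + 1)⁻¹ := by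
    rw [Finset.sum_range_succ' (fun d => (b : ℝ) / (X * d))]
    simp only [Nat.cast_zero, mul_zero, div_zero, add_zero]
    rw [Finset.mul_sum]
    refine Finset.sum_congr rfl ?_
    intro i _
    push_cast
    rw [div_mul_eq_div_div, div_eq_mul_inv ((b:ℝ)/X)]
  have hharm2 : ∑ i ∈ Finset.range m, ((i : ℝ) + 1)⁻¹ ≤ 1 + Real.log (4 + B) := by
    have h1 : ∑ i ∈ Finset.range m, ((i : ℝ) + 1)⁻¹ = ((harmonic m : ℚ) : ℝ) := by
      rw [harmonic]
      push_cast
      exact Finset.sum_congr rfl fun i _ => by ring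
    rw [h1]
    exact le_trans (harmonic_le_one_add_log m) (by linarith)
  have hbX : (0 : ℝ) ≤ (b : ℝ) / X := by positivity
  calc ∑ p ∈ S, f p ≤ ∑ d ∈ Finset.range n, (b : ℝ) / (X * d) := hmain
    _ = ((b : ℝ) / X) * ∑ i ∈ Finset.range m, ((i : ℝ) + 1)⁻¹ := by rw [hm, hharm]
    _ ≤ ((b : ℝ) / X) * (1 + Real.log (4 + B)) := mul_le_mul_of_nonneg_left hharm2 hbX
    _ ≤ ((b : ℝ) / X) * (2 * Real.log (4 + B)) := by
        apply mul_le_mul_of_nonneg_left _ hbX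
        linarith
    _ = 2 * (b : ℝ) * Real.log (4 + B) ^ (1 : ℝ) / X := by
        rw [Real.rpow_one]
        field_simp
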